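/- arXiv:2301.01822 — 2 statements merged into one kernel-verified Lean document; each statement's English description precedes it below -/
import Mathlib

section
/- Let α > 0. The supremum over b ∈ ℂ of the area of M_α(B⁴(1)) ∩ {z₂ = b} is attained at b = 0, i.e., for every b ∈ ℝ², the area of the slice {(x₁,y₁) : (x₁,y₁,b₁,b₂) ∈ M_α(B⁴(1))} is at most the area of the slice at b = 0. -/
open Matrix MeasureTheory

/-- The matrix `M_α` on `ℝ⁴` with coordinates `(x₁,y₁,x₂,y₂)`. -/
noncomputable def Mmat (α : ℝ) : Matrix (Fin 4) (Fin 4) ℝ :=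
  !![α, 0, 0, -1;
     0, 1/α, 0, 0;
     0, -1, α, 0;
     0, 0, 0, 1/α]

/-- The slice of `M_α(B⁴(1))` over `z₂ = b`, viewed as a subset of `ℝ²`. -/
def mslice (α : ℝ) (b : ℝ × ℝ) : Set (ℝ × ℝ) :=
  {p : ℝ × ℝ | ∃ u : Fin 4 → ℝ, (∑ i, u i ^ 2) < 1 ∧
    (Mmat α).mulVec u = ![p.1, p.2, b.1, b.2]}

/-- For `α > 0`, the area of the slice of `M_α(B⁴(1))` at `z₂ = b` is at most the
    area of the slice at `b = 0`; i.e. the supremum of slice areas is attained at `0`. -/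
theorem area_slice_le_slice_zero (α : ℝ) (hα : 0 < α) (b : ℝ × ℝ) :
    volume (mslice α b) ≤ volume (mslice α (0, 0)) := by
  have hα' : α ≠ 0 := ne_of_gt hα
  set v : ℝ × ℝ := (α * b.2, b.1 / (α * (α ^ 2 + 1))) with hv
  have hsub : mslice α b ⊆ (fun p => p + v) ⁻¹' mslice α (0, 0) := by
    rintro p ⟨u, hu, hM⟩
    have e0 := congrFun hM 0
    have e1 := congrFun hM 1
    have e2 := congrFun hM 2
    have e3 := congrFun hM 3
    simp [Mmat, Matrix.mulVec, dotProduct, Fin.sum_univ_four] at e0 e1 e2 e3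
    -- components of u
    have hu1 : u 1 = α * p.2 := by field_simp at e1; linarith
    have hu3 : u 3 = α * b.2 := by field_simp at e3; linarith
    set Y : ℝ := p.2 + b.1 / (α * (α ^ 2 + 1)) with hY
    have hpos : (0:ℝ) < α ^ 2 + 1 := by positivity
    have hYeq : Y = (α * u 1 + u 2) / (α ^ 2 + 1) := by
      rw [hY, hu1]
      have hb1 : b.1 = -u 1 + α * u 2 := by linarith [e2]
      rw [hb1, hu1]
      field_simp
      ring
    refine ⟨![(p.1 + α * b.2) / α, α * Y, Y, 0], ?_, ?_⟩
    · have hX : (p.1 + α * b.2) / α = u 0 := by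
        have : p.1 = α * u 0 - u 3 := by linarith [e0]
        rw [this, hu3]; field_simp; ring
      rw [Fin.sum_univ_four]
      simp only [Matrix.cons_val_zero, Matrix.cons_val_one, Matrix.head_cons,
        Matrix.cons_val_two, Matrix.tail_cons, Matrix.cons_val_three]
      rw [hX]
      have key : (α ^ 2 + 1) * Y ^ 2 ≤ u 1 ^ 2 + u 2 ^ 2 := by
        have h2 : (α ^ 2 + 1) * Y = α * u 1 + u 2 := by
          rw [hYeq]; field_simp
        have h2sq : ((α ^ 2 + 1) * Y) ^ 2 = (α * u 1 + u 2) ^ 2 := by rw [h2]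
        nlinarith [h2sq, sq_nonneg (u 1 - α * u 2), hpos, sq_nonneg Y]
      have hsum : u 0 ^ 2 + u 1 ^ 2 + u 2 ^ 2 + u 3 ^ 2 < 1 := by
        rw [Fin.sum_univ_four] at hu; linarith
      nlinarith [sq_nonneg (u 3), hpos, sq_nonneg Y]
    · funext i
      fin_cases i <;>
        simp [Mmat, Matrix.mulVec, dotProduct, Fin.sum_univ_four, hv, hY, inv_mul_cancel_left₀ hα'] <;>
        field_simp [hpos.ne'] <;> ring
  calc volume (mslice α b) ≤ volume ((fun p => p + v) ⁻¹' mslice α (0, 0)) :=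
        measure_mono hsub
    _ = volume (mslice α (0, 0)) := by
        exact measure_preimage_add_right volume v _
end

section
/- For any a > 0 and L > 1 with a² < 1 < L (so that the map A^L is not symplectically conformal), consider n = 2 and the maps on ℝ⁴: there exist symplectic 4×4 matrices U and V such that the top-left 2×2 block of V A^L U equals a·Id₂ and the top-right 2×2 block equals 0, where A^L = diag(1,1,L,L). -/
open Matrix

/-- The standard symplectic matrix `J₀` on `ℝ⁴`. -/
def J0 : Matrix (Fin 4) (Fin 4) ℝ :=
  !![0, 1, 0, 0;
    -1, 0, 0, 0;
     0, 0, 0, 1;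
     0, 0, -1, 0]

/-- `M` is symplectic iff `Mᵀ J₀ M = J₀`. -/
def IsSymplMat (M : Matrix (Fin 4) (Fin 4) ℝ) : Prop := Mᵀ * J0 * M = J0

/-- `A^L = diag(1,1,L,L)`, scaling the last two coordinates by `L`. -/
noncomputable def ALmat (L : ℝ) : Matrix (Fin 4) (Fin 4) ℝ :=
  !![1, 0, 0, 0;
     0, 1, 0, 0;
     0, 0, L, 0;
     0, 0, 0, L]

set_option maxHeartbeats 1600000 in
/-- Eliashberg's lemma, `n = 2`: for `0 < a`, `a² < 1 < L` there are symplectic matrices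
    `U, V` such that `V A^L U` has top-left `2×2` block `a·Id₂` and top-right block `0`. -/
theorem eliashberg_n2 (a L : ℝ) (ha : 0 < a) (ha1 : a ^ 2 < 1) (hL : 1 < L) :
    ∃ U V : Matrix (Fin 4) (Fin 4) ℝ, IsSymplMat U ∧ IsSymplMat V ∧
      (V * ALmat L * U) 0 0 = a ∧ (V * ALmat L * U) 0 1 = 0 ∧
      (V * ALmat L * U) 1 0 = 0 ∧ (V * ALmat L * U) 1 1 = a ∧
      (V * ALmat L * U) 0 2 = 0 ∧ (V * ALmat L * U) 0 3 = 0 ∧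
      (V * ALmat L * U) 1 2 = 0 ∧ (V * ALmat L * U) 1 3 = 0 := by
  have ha0 : a ≠ 0 := ne_of_gt ha
  have hL2 : L ^ 2 - 1 ≠ 0 := by nlinarith
  obtain ⟨q, hq⟩ : ∃ q : ℝ, q = (a ^ 2 - 1) / (L ^ 2 - 1) := ⟨_, rfl⟩
  obtain ⟨p, hp⟩ : ∃ p : ℝ, p = 1 - q := ⟨_, rfl⟩
  refine ⟨!![p/a, 0, -L, 0;
             0, 1/a, 0, -(L*q)/a^2;
             L*q/a, 0, 1, 0;
             0, L/a, 0, p/a^2],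
          !![1, 0, 1, 0;
             0, p, 0, q;
             -q, 0, p, 0;
             0, -1, 0, 1], ?_, ?_, ?_, ?_, ?_, ?_, ?_, ?_, ?_, ?_⟩
  · unfold IsSymplMat J0
    have hT : (!![p/a, 0, -L, 0;
             0, 1/a, 0, -(L*q)/a^2;
             L*q/a, 0, 1, 0;
             0, L/a, 0, p/a^2] : Matrix (Fin 4) (Fin 4) ℝ)ᵀ
        = !![p/a, 0, L*q/a, 0;
             0, 1/a, 0, L/a;
             -L, 0, 1, 0;
             0, -(L*q)/a^2, 0, p/a^2] := by
      ext i j; fin_cases i <;> fin_cases j <;> rfl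
    rw [hT]
    ext i j
    fin_cases i <;> fin_cases j <;>
      · simp [Matrix.mul_apply, Fin.sum_univ_four, Matrix.vecHead, Matrix.vecTail]
        try simp only [hp, hq]
        try field_simp
        try ring
  · unfold IsSymplMat J0
    have hT : (!![1, 0, 1, 0;
             0, p, 0, q;
             -q, 0, p, 0;
             0, -1, 0, 1] : Matrix (Fin 4) (Fin 4) ℝ)ᵀ
        = !![1, 0, -q, 0;
             0, p, 0, -1;
             1, 0, p, 0;
             0, q, 0, 1] := by
      ext i j; fin_cases i <;> fin_cases j <;> rfl
    rw [hT]
    ext i j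
    fin_cases i <;> fin_cases j <;>
      · simp [Matrix.mul_apply, Fin.sum_univ_four, Matrix.vecHead, Matrix.vecTail]
        try simp only [hp, hq]
        try field_simp
        try ring
  all_goals
    · simp [ALmat, Matrix.mul_apply, Fin.sum_univ_four, Matrix.vecHead, Matrix.vecTail]
      try simp only [hp, hq]
      try field_simp
      try ring
end
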